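/- The map 𝓜 is equal to each of the following four maps: (I − a⁻¹qψ)⁻¹K, K(I − a⁻¹q⁻¹ψ)⁻¹, (I − aqψ)⁻¹B, and B(I − aq⁻¹ψ)⁻¹. -/

import Mathlib

theorem stmt_0
    {𝕂 : Type*} [Field 𝕂] {V : Type*} [AddCommGroup V] [Module 𝕂 V]
    [FiniteDimensional 𝕂 V]
    (d : ℕ) (hd : 1 ≤ d) (q a : 𝕂) (hq : q ≠ 0) (ha : a ≠ 0)
    (hq2 : ∀ i : ℕ, 1 ≤ i → i ≤ d → q ^ (2 * i) ≠ 1)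
    (ha2 : ∀ i : ℤ, 1 - (d : ℤ) ≤ i → i ≤ (d : ℤ) - 1 → a ^ 2 ≠ q ^ (2 * i))
    (K : Module.End 𝕂 V) (hK : IsUnit K)
    (U : ℕ → Submodule 𝕂 V)
    (hUne : ∀ i, i ≤ d → U i ≠ ⊥)
    (hUint : DirectSum.IsInternal (fun i : Fin (d + 1) => U i.1))
    (hKU : ∀ i, i ≤ d → ∀ v ∈ U i, K v = (q ^ ((d : ℤ) - 2 * (i : ℤ))) • v)
    (ψ : Module.End 𝕂 V)
    (hψ0 : ∀ v ∈ U 0, ψ v = 0)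
    (hψU : ∀ i, 1 ≤ i → i ≤ d → ∀ v ∈ U i, ψ v ∈ U (i - 1))
    (hψnil : ψ ^ (d + 1) = 0)
    (hKψ : K * ψ = q ^ 2 • (ψ * K))
    (hinv : ∀ x : 𝕂, IsUnit (1 - x • ψ))
    (B : Module.End 𝕂 V)
    (hB : B = (1 - (a * q) • ψ) * Ring.inverse (1 - (a⁻¹ * q) • ψ) * K)
    (M : Module.End 𝕂 V)
    (hM : M = (a - a⁻¹)⁻¹ • (a • K - a⁻¹ • B))
    (hMunit : IsUnit M):
    M = Ring.inverse (1 - (a⁻¹ * q) • ψ) * K ∧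
    M = K * Ring.inverse (1 - (a⁻¹ * q⁻¹) • ψ) ∧
    M = Ring.inverse (1 - (a * q) • ψ) * B ∧
    M = B * Ring.inverse (1 - (a * q⁻¹) • ψ) := by
  -- a - a⁻¹ ≠ 0
  have ha1 : a - a⁻¹ ≠ 0 := by
    have h0 : a ^ 2 ≠ q ^ (2 * (0:ℤ)) := ha2 0 (by omega) (by omega)
    simp only [mul_zero, zpow_zero] at h0
    intro h
    apply h0
    have h' : a = a⁻¹ := sub_eq_zero.mp h
    have : a * a = a * a⁻¹ := by rw [← h']
    rw [mul_inv_cancel₀ ha] at this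
    rw [sq]; exact this
  -- K commutation with 1 - x•ψ
  have hKx : ∀ x : 𝕂, K * (1 - x • ψ) = (1 - (q^2*x) • ψ) * K := by
    intro x
    simp only [mul_sub, sub_mul, mul_one, one_mul, mul_smul_comm, smul_mul_assoc, hKψ,
      smul_smul]
    ring_nf
  have hinvK : ∀ x : 𝕂, K * Ring.inverse (1 - x • ψ) = Ring.inverse (1 - (q^2*x) • ψ) * K := by
    intro x
    have hu := hinv x
    have hv := hinv (q^2*x)
    calc K * Ring.inverse (1 - x•ψ)
        = Ring.inverse (1 - (q^2*x)•ψ) * ((1 - (q^2*x)•ψ) * K) * Ring.inverse (1 - x•ψ) := by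
          rw [← mul_assoc, Ring.inverse_mul_cancel _ hv, one_mul]
      _ = Ring.inverse (1 - (q^2*x)•ψ) * (K * (1 - x•ψ)) * Ring.inverse (1 - x•ψ) := by
          rw [← hKx]
      _ = Ring.inverse (1 - (q^2*x)•ψ) * K := by
          rw [mul_assoc, mul_assoc, Ring.mul_inverse_cancel _ hu, mul_one]
  -- commutation among the 1 - x•ψ family
  have hcomm : ∀ x y : 𝕂, Commute (1 - x•ψ) (1 - y•ψ) := by
    intro x y
    have h1 : Commute (x•ψ) (y•ψ) := ((Commute.refl ψ).smul_right y).smul_left x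
    exact Commute.sub_left (Commute.one_left _) (Commute.sub_right (Commute.one_right _) h1)
  -- abbreviations
  set u : Module.End 𝕂 V := 1 - (a⁻¹ * q) • ψ with hu'
  set w : Module.End 𝕂 V := 1 - (a * q) • ψ with hw'
  have hu : IsUnit u := by rw [hu']; exact hinv _
  have hw : IsUnit w := by rw [hw']; exact hinv _
  set P : Module.End 𝕂 V := Ring.inverse u with hP'
  clear_value u w P
  -- first claim
  have h2 : a • u - a⁻¹ • w = (a - a⁻¹) • (1 : Module.End 𝕂 V) := by
    have e1 : a * (a⁻¹*q) = q := by field_simp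
    have e2 : a⁻¹ * (a*q) = q := by field_simp
    rw [hu', hw', smul_sub, smul_sub, smul_smul, smul_smul, e1, e2, sub_smul]
    abel
  have hM1 : M = P * K := by
    rw [hM, hB]
    have huP : u * P = 1 := by rw [hP']; exact Ring.mul_inverse_cancel _ hu
    have step : a • K - a⁻¹ • (w * P * K)
        = (a • u - a⁻¹ • w) * (P * K) := by
      calc a • K - a⁻¹ • (w * P * K)
          = a • (u * P * K) - a⁻¹ • (w * P * K) := by rw [huP, one_mul]
        _ = (a • u - a⁻¹ • w) * (P * K) := by
            rw [sub_mul, smul_mul_assoc, smul_mul_assoc, mul_assoc, mul_assoc]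
    rw [step, h2, smul_mul_assoc, one_mul, smul_smul, inv_mul_cancel₀ ha1, one_smul]
  refine ⟨hM1, ?_, ?_, ?_⟩
  · -- M = K * inv(1 - a⁻¹q⁻¹ ψ)
    have e : q^2 * (a⁻¹ * q⁻¹) = a⁻¹ * q := by field_simp
    rw [hM1, hP', hu', ← e, ← hinvK]
  · -- M = inv w * B
    have hwP : Ring.inverse w * w = 1 := Ring.inverse_mul_cancel _ hw
    rw [hB, ← mul_assoc, ← mul_assoc, hwP, one_mul, hM1]
  · -- M = B * inv (1 - a q⁻¹ ψ)
    have e : q^2 * (a * q⁻¹) = a * q := by field_simp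
    have hKt : K * Ring.inverse (1 - (a * q⁻¹) • ψ) = Ring.inverse w * K := by
      rw [hw', ← e, ← hinvK]
    have hcuw : Commute u w := by rw [hu', hw']; exact hcomm _ _
    have hPc : P * Ring.inverse w = Ring.inverse w * P := by
      rw [hP']; exact hcuw.ringInverse_ringInverse
    have hwinv : w * Ring.inverse w = 1 := Ring.mul_inverse_cancel _ hw
    rw [hB, mul_assoc, mul_assoc, hKt, ← mul_assoc P, hPc, mul_assoc, ← mul_assoc,
      hwinv, one_mul, hM1]
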